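/- Let s ∈ (0, 1] and let a₁, …, a_n be i.i.d. real random variables, each equal to 0 with probability 1−s and distributed as N(0, 1/s) with probability s. Let λ₀ > 0 and let y ∈ ℝ^n satisfy ‖y‖₂ = 1 and ‖y‖_∞ ≤ λ₀, and set Y = Σ_{j=1}^n a_j·y_j. Then for every t with 0 ≤ t ≤ √(2s)/λ₀, one has E[e^{t·Y}] ≤ e^{t²}. -/

import Mathlib

open MeasureTheory ProbabilityTheory Real
open scoped NNReal ENNReal

noncomputable section

/-- Matrix–vector product for matrices represented as functions. -/
def matVec {a b : ℕ} (M : Fin a → Fin b → ℝ) (x : Fin b → ℝ) : Fin a → ℝ :=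
  fun i => ∑ j, M i j * x j

/-- Matrix–matrix product for matrices represented as functions. -/
def matMul {a b c : ℕ} (M : Fin a → Fin b → ℝ) (N : Fin b → Fin c → ℝ) :
    Fin a → Fin c → ℝ :=
  fun i k => ∑ j, M i j * N j k

/-- Powers of a square matrix represented as a function. -/
def matPow {a : ℕ} (M : Fin a → Fin a → ℝ) : ℕ → (Fin a → Fin a → ℝ)
  | 0 => fun i j => if i = j then 1 else 0
  | k + 1 => matMul (matPow M k) M

/-- The ℓ¹ norm on ℝ^k. -/
def l1Norm {k : ℕ} (x : Fin k → ℝ) : ℝ := ∑ i, |x i|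

/-- The ℓ² norm on ℝ^k. -/
def l2Norm {k : ℕ} (x : Fin k → ℝ) : ℝ := Real.sqrt (∑ i, (x i) ^ 2)

/-- The ℓ^∞ norm on ℝ^k. -/
def lInfNorm {k : ℕ} (x : Fin k → ℝ) : ℝ := ⨆ i, |x i|

/-- The (∞,1) operator norm: `max_{x ≠ 0} ‖Kx‖₁ / ‖x‖_∞`. -/
def opNormInfOne {a b : ℕ} (K : Fin a → Fin b → ℝ) : ℝ :=
  sSup {t : ℝ | ∃ x : Fin b → ℝ, x ≠ 0 ∧ t = l1Norm (matVec K x) / lInfNorm x}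

/-- The (∞,∞) operator norm: `max_{x ≠ 0} ‖Kx‖_∞ / ‖x‖_∞`. -/
def opNormInfInf {a b : ℕ} (K : Fin a → Fin b → ℝ) : ℝ :=
  sSup {t : ℝ | ∃ x : Fin b → ℝ, x ≠ 0 ∧ t = lInfNorm (matVec K x) / lInfNorm x}

/-- The law `(1-s)·δ₀ + s·N(0,1/s)` of a single entry of a sparse Gaussian random matrix. -/
def sparseGaussianLaw (s : ℝ) : Measure ℝ :=
  (Real.toNNReal (1 - s)) • Measure.dirac (0 : ℝ) +
    (Real.toNNReal s) • gaussianReal 0 (Real.toNNReal s)⁻¹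

/-- The law of a sparse Gaussian random matrix with i.i.d. entries of law
`(1-s)·δ₀ + s·N(0,1/s)`. -/
def sparseGaussianMatrixLaw (m n : ℕ) (s : ℝ) : Measure (Fin m → Fin n → ℝ) :=
  Measure.pi fun _ : Fin m => Measure.pi fun _ : Fin n => sparseGaussianLaw s

/-- The uniform law on `{-1, 1}`. -/
def signLaw : Measure ℝ :=
  ((2 : ℝ≥0)⁻¹) • Measure.dirac (1 : ℝ) + ((2 : ℝ≥0)⁻¹) • Measure.dirac (-1 : ℝ)

/-- The law of a vector of i.i.d. uniform ±1 signs. -/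
def signVecLaw (n : ℕ) : Measure (Fin n → ℝ) := Measure.pi fun _ : Fin n => signLaw

/-- Bitwise dot product of the binary representations of two natural numbers. -/
def bitDot (i j : ℕ) : ℕ :=
  ∑ k ∈ Finset.range i.size, if i.testBit k && j.testBit k then 1 else 0

/-- The normalized Walsh–Hadamard matrix `H_{ij} = n^{-1/2} (-1)^{⟨i,j⟩}` (0-indexed). -/
def walshHadamard (n : ℕ) : Fin n → Fin n → ℝ :=
  fun i j => (Real.sqrt n)⁻¹ * (-1 : ℝ) ^ bitDot (i : ℕ) (j : ℕ)

/-- The fast Johnson–Lindenstrauss transform `Φ = A·H·D` where `D = diag d`. -/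
def fjlt {m n : ℕ} (A : Fin m → Fin n → ℝ) (d : Fin n → ℝ) : Fin m → Fin n → ℝ :=
  matMul A (matMul (walshHadamard n) (fun i j => if i = j then d i else 0))

/-- The coefficient of `z^j` in `(1 + z + ⋯ + z^{lt-1})^r`. -/
def condCoeff (r lt : ℕ) (j : ℕ) : ℝ :=
  ((∑ i ∈ Finset.range lt, (Polynomial.X : Polynomial ℝ) ^ i) ^ r).coeff j

/-- The condensation vector `v ∈ ℝ^λ` of order `r`. -/
def condVec (r lt lam : ℕ) : Fin lam → ℝ := fun j => condCoeff r lt (j : ℕ)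

/-- The block matrix `I_p ⊗ v ∈ ℝ^{p × (λp)}` built from a row vector `v ∈ ℝ^λ`. -/
def kronRow {lam p : ℕ} (v : Fin lam → ℝ) (i : Fin p) (c : Fin (lam * p)) : ℝ :=
  if (c : ℕ) / lam = (i : ℕ) then
    v ⟨(c : ℕ) % lam, Nat.mod_lt _ (Nat.pos_of_ne_zero fun h => absurd c.isLt (by simp [h]))⟩
  else 0

/-- The condensation operator `V = I_p ⊗ v`. -/
def condOp (r lt lam p : ℕ) : Fin p → Fin (lam * p) → ℝ :=
  kronRow (condVec r lt lam)

/-- The normalized condensation operator `Ṽ = (√(π/2)/(p‖v‖₂)) V`. -/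
def normCondOp (r lt lam p : ℕ) : Fin p → Fin (lam * p) → ℝ :=
  fun i c => (Real.sqrt (Real.pi / 2) / ((p : ℝ) * l2Norm (condVec r lt lam))) *
    condOp r lt lam p i c

/-- The first-order difference matrix `P`. -/
def diffMat (m : ℕ) : Fin m → Fin m → ℝ :=
  fun i j => if (i : ℕ) = (j : ℕ) then 1 else if (i : ℕ) = (j : ℕ) + 1 then -1 else 0

/-- Pairing `(i, k) ↦ i·λ + k` as an index into `Fin (λ·p)`. -/
def finPair {p lam : ℕ} (i : Fin p) (k : Fin lam) : Fin (lam * p) :=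
  ⟨(i : ℕ) * lam + (k : ℕ), by
    calc (i : ℕ) * lam + (k : ℕ) < (i : ℕ) * lam + lam := Nat.add_lt_add_left k.isLt _
      _ = ((i : ℕ) + 1) * lam := by ring
      _ ≤ p * lam := Nat.mul_le_mul_right lam i.isLt
      _ = lam * p := Nat.mul_comm p lam⟩

/-- The Kronecker product `v^T ⊗ y ∈ ℝ^{λn}`, whose `(k·n + j)`-th entry is `v_k · y_j`. -/
def kronVec {lam n : ℕ} (v : Fin lam → ℝ) (y : Fin n → ℝ) : Fin (lam * n) → ℝ :=
  fun c =>
    have hn : 0 < n := Nat.pos_of_ne_zero fun h => absurd c.isLt (by simp [h])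
    v ⟨(c : ℕ) / n, (Nat.div_lt_iff_lt_mul hn).mpr c.isLt⟩ * y ⟨(c : ℕ) % n, Nat.mod_lt _ hn⟩

/-- Reshaping of an `(λp) × n` matrix into a `p × (λn)` matrix, with
`B_{i, k·n + j} = A_{i·λ + k, j}`. -/
def reshapeMat {lam p n : ℕ} (A : Fin (lam * p) → Fin n → ℝ) :
    Fin p → Fin (lam * n) → ℝ :=
  fun i c =>
    have hn : 0 < n := Nat.pos_of_ne_zero fun h => absurd c.isLt (by simp [h])
    A (finPair i ⟨(c : ℕ) / n, (Nat.div_lt_iff_lt_mul hn).mpr c.isLt⟩)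
      ⟨(c : ℕ) % n, Nat.mod_lt _ hn⟩

/-- The support `n_j = σ·j² + 1` (zero-indexed `j`, i.e. `σ(j-1)²+1` one-indexed). -/
def sigmaDeltaIdx (σ : ℕ) {r : ℕ} (j : Fin r) : ℕ := σ * (j : ℕ) ^ 2 + 1

/-- The filter coefficient `d_j = ∏_{i ≠ j} n_i / (n_i - n_j)`. -/
def sigmaDeltaCoef (σ : ℕ) {r : ℕ} (j : Fin r) : ℝ :=
  ∏ i ∈ Finset.univ.erase j,
    (sigmaDeltaIdx σ i : ℝ) / ((sigmaDeltaIdx σ i : ℝ) - (sigmaDeltaIdx σ j : ℝ))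

end

noncomputable section

lemma integrable_rexp_quadratic {b : ℝ} (hb : b < 0) (c : ℝ) :
    Integrable (fun x : ℝ => Real.exp (b * x ^ 2 + c * x)) := by
  have h := (integrable_cexp_quadratic' (b := (b : ℂ)) (by simpa using hb) (c : ℂ) 0).re
  refine h.congr (Filter.Eventually.of_forall fun x => ?_)
  have hx : ((b : ℂ) * (x : ℂ) ^ 2 + (c : ℂ) * (x : ℂ) + 0)
      = ((b * x ^ 2 + c * x : ℝ) : ℂ) := by push_cast; ring
  simp only [hx, Complex.exp_ofReal_re, RCLike.re_to_complex]

lemma integral_rexp_quadratic {b : ℝ} (hb : b < 0) (c : ℝ) :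
    ∫ x : ℝ, Real.exp (b * x ^ 2 + c * x)
      = Real.sqrt (π / (-b)) * Real.exp (-c ^ 2 / (4 * b)) := by
  have h := integral_cexp_quadratic (b := (b : ℂ)) (by simpa using hb) (c : ℂ) 0
  have h1 : (fun x : ℝ => Complex.exp ((b : ℂ) * (x : ℂ) ^ 2 + (c : ℂ) * (x : ℂ) + 0))
      = fun x : ℝ => ((Real.exp (b * x ^ 2 + c * x) : ℝ) : ℂ) := by
    funext x
    rw [Complex.ofReal_exp]
    congr 1
    push_cast; ring
  rw [h1] at h
  have h4 : ∫ x : ℝ, ((Real.exp (b * x ^ 2 + c * x) : ℝ) : ℂ)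
      = ((∫ x : ℝ, Real.exp (b * x ^ 2 + c * x) : ℝ) : ℂ) := integral_ofReal
  rw [h4] at h
  have h2 : ((Real.pi : ℂ) / -(b : ℂ)) ^ (1 / 2 : ℂ)
      = ((Real.sqrt (π / (-b)) : ℝ) : ℂ) := by
    have hpos : (0 : ℝ) ≤ π / (-b) := div_nonneg Real.pi_pos.le (by linarith)
    rw [Real.sqrt_eq_rpow]
    rw [show ((Real.pi : ℂ) / -(b : ℂ)) = ((π / (-b) : ℝ) : ℂ) by push_cast; ring]
    rw [show ((1 : ℂ) / 2) = ((1 / 2 : ℝ) : ℂ) by norm_num]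
    exact (Complex.ofReal_cpow hpos _).symm
  rw [h2] at h
  have h3 : Complex.exp (0 - (c : ℂ) ^ 2 / (4 * (b : ℂ)))
      = ((Real.exp (-c ^ 2 / (4 * b)) : ℝ) : ℂ) := by
    rw [Complex.ofReal_exp]
    congr 1
    push_cast; ring
  rw [h3, ← Complex.ofReal_mul] at h
  exact_mod_cast h

lemma gaussian_mgf (c : ℝ) {v : ℝ≥0} (hv : v ≠ 0) :
    ∫ x, Real.exp (c * x) ∂(gaussianReal 0 v) = Real.exp (c ^ 2 * v / 2) := by
  have hv' : (0 : ℝ) < v := by positivity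
  rw [gaussianReal_of_var_ne_zero _ hv]
  have hpdf : gaussianPDF 0 v
      = fun x => ((Real.toNNReal (gaussianPDFReal 0 v x) : ℝ≥0) : ℝ≥0∞) := rfl
  rw [hpdf, integral_withDensity_eq_integral_smul
    ((measurable_gaussianPDFReal 0 v).real_toNNReal)]
  have hb : -(2 * (v : ℝ))⁻¹ < 0 := by
    have : (0:ℝ) < (2 * (v : ℝ))⁻¹ := by positivity
    linarith
  have heq : ∀ x : ℝ, (Real.toNNReal (gaussianPDFReal 0 v x) : ℝ≥0) • Real.exp (c * x)
      = (Real.sqrt (2 * π * v))⁻¹ * Real.exp (-(2 * (v : ℝ))⁻¹ * x ^ 2 + c * x) := by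
    intro x
    rw [NNReal.smul_def, smul_eq_mul, Real.coe_toNNReal _ (gaussianPDFReal_nonneg 0 v x)]
    unfold gaussianPDFReal
    rw [mul_assoc, ← Real.exp_add, sub_zero,
      show -x ^ 2 / (2 * (v : ℝ)) = -(2 * (v : ℝ))⁻¹ * x ^ 2 from by
        rw [div_eq_mul_inv]; ring]
  simp_rw [heq]
  rw [integral_const_mul, integral_rexp_quadratic hb c]
  have hs : π / -(-(2 * (v : ℝ))⁻¹) = 2 * π * v := by
    rw [neg_neg]
    field_simp
  rw [hs]
  have hexp : -c ^ 2 / (4 * -(2 * (v : ℝ))⁻¹) = c ^ 2 * v / 2 := by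
    field_simp
    ring
  rw [hexp, ← mul_assoc, inv_mul_cancel₀ (by positivity : Real.sqrt (2 * π * v) ≠ 0), one_mul]

lemma integrable_exp_gaussian (c : ℝ) {v : ℝ≥0} (hv : v ≠ 0) :
    Integrable (fun x => Real.exp (c * x)) (gaussianReal 0 v) := by
  have hv' : (0 : ℝ) < v := by positivity
  rw [gaussianReal_of_var_ne_zero _ hv]
  rw [integrable_withDensity_iff (measurable_gaussianPDF 0 v)
    (Filter.Eventually.of_forall fun x => ENNReal.ofReal_lt_top)]
  have hb : -(2 * (v : ℝ))⁻¹ < 0 := by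
    have : (0:ℝ) < (2 * (v : ℝ))⁻¹ := by positivity
    linarith
  refine ((integrable_rexp_quadratic hb c).const_mul (Real.sqrt (2 * π * v))⁻¹).congr
    (Filter.Eventually.of_forall fun x => ?_)
  simp only [gaussianPDF_def]
  rw [ENNReal.toReal_ofReal (gaussianPDFReal_nonneg 0 v x)]
  unfold gaussianPDFReal
  rw [sub_zero,
    show -x ^ 2 / (2 * (v : ℝ)) = -(2 * (v : ℝ))⁻¹ * x ^ 2 from by
      rw [div_eq_mul_inv]; ring, Real.exp_add]
  ring

end
noncomputable section

lemma integrable_exp_dirac (c : ℝ) :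
    Integrable (fun x => Real.exp (c * x)) (Measure.dirac (0 : ℝ)) :=
  (integrable_const (Real.exp (c * 0))).congr (ae_eq_dirac fun x => Real.exp (c * x)).symm

lemma toNNReal_s_ne_zero {s : ℝ} (hs0 : 0 < s) : Real.toNNReal s ≠ 0 :=
  fun h => absurd (Real.toNNReal_eq_zero.mp h) (not_le.mpr hs0)

lemma sparse_mgf (s : ℝ) (hs0 : 0 < s) (hs1 : s ≤ 1) (c : ℝ) :
    ∫ x, Real.exp (c * x) ∂(sparseGaussianLaw s) =
      (1 - s) + s * Real.exp (c ^ 2 / (2 * s)) := by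
  have hv : ((Real.toNNReal s)⁻¹ : ℝ≥0) ≠ 0 := inv_ne_zero (toNNReal_s_ne_zero hs0)
  unfold sparseGaussianLaw
  rw [integral_add_measure ((integrable_exp_dirac c).smul_measure_nnreal)
      ((integrable_exp_gaussian c hv).smul_measure_nnreal),
    integral_smul_nnreal_measure, integral_smul_nnreal_measure,
    integral_dirac, gaussian_mgf c hv]
  rw [NNReal.smul_def, NNReal.smul_def, smul_eq_mul, smul_eq_mul,
    Real.coe_toNNReal _ (by linarith : (0:ℝ) ≤ 1 - s), Real.coe_toNNReal _ hs0.le,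
    mul_zero, Real.exp_zero, mul_one]
  congr 2
  rw [NNReal.coe_inv, Real.coe_toNNReal _ hs0.le]
  congr 1
  rw [div_eq_div_iff (by norm_num) (by positivity)]
  field_simp

lemma exp_le_one_add_two_mul {x : ℝ} (h0 : 0 ≤ x) (h1 : x ≤ 1) :
    Real.exp x ≤ 1 + 2 * x := by
  have hc := convexOn_exp.2 (Set.mem_univ (0:ℝ)) (Set.mem_univ (1:ℝ))
    (by linarith : (0:ℝ) ≤ 1 - x) h0 (by ring)
  simp only [smul_eq_mul, mul_zero, mul_one, zero_add, Real.exp_zero] at hc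
  have he : Real.exp 1 ≤ 3 := by
    have := Real.exp_one_lt_d9
    linarith
  nlinarith

lemma integral_pi_prod {m : ℕ} (μ : Measure ℝ) [IsProbabilityMeasure μ] (f : Fin m → ℝ → ℝ) :
    ∫ x : Fin m → ℝ, ∏ i, f i (x i) ∂(Measure.pi fun _ => μ) = ∏ i, ∫ x, f i x ∂μ := by
  letI : MeasureSpace ℝ := ⟨μ⟩
  haveI : SigmaFinite (volume : Measure ℝ) := by
    change SigmaFinite μ; infer_instance
  exact MeasureTheory.integral_fintype_prod_eq_prod (fun i => f i)

lemma sparse_prob (s : ℝ) (hs0 : 0 < s) (hs1 : s ≤ 1) :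
    IsProbabilityMeasure (sparseGaussianLaw s) := by
  constructor
  unfold sparseGaussianLaw
  simp only [Measure.coe_add, Measure.coe_smul, Pi.add_apply, Pi.smul_apply,
    measure_univ, smul_eq_mul, mul_one]
  rw [ENNReal.smul_def, ENNReal.smul_def]
  simp only [smul_eq_mul, mul_one]
  rw [show ((Real.toNNReal (1-s) : ℝ≥0) : ℝ≥0∞) = ENNReal.ofReal (1-s) from rfl,
    show ((Real.toNNReal s : ℝ≥0) : ℝ≥0∞) = ENNReal.ofReal s from rfl,
    ← ENNReal.ofReal_add (by linarith) hs0.le]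
  norm_num

end


/-- Moment generating function bound for a sparse Gaussian linear form. -/
theorem sparse_gaussian_mgf_bound (n : ℕ) (s : ℝ) (hs0 : 0 < s) (hs1 : s ≤ 1)
    (lam₀ : ℝ) (hlam₀ : 0 < lam₀) (y : Fin n → ℝ) (hy2 : l2Norm y = 1)
    (hyinf : lInfNorm y ≤ lam₀)
    (Ω : Type) [MeasurableSpace Ω] (P : Measure Ω) [IsProbabilityMeasure P]
    (a : Ω → Fin n → ℝ) (ha : Measurable a)
    (hlaw : P.map a = Measure.pi fun _ : Fin n => sparseGaussianLaw s) :
    ∀ t : ℝ, 0 ≤ t → t ≤ Real.sqrt (2 * s) / lam₀ →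
      ∫ ω, Real.exp (t * ∑ j, a ω j * y j) ∂P ≤ Real.exp (t ^ 2) := by
  intro t ht htle
  haveI : IsProbabilityMeasure (sparseGaussianLaw s) := sparse_prob s hs0 hs1
  have hsum : ∑ j, y j ^ 2 = 1 := by
    have h := hy2
    unfold l2Norm at h
    exact Real.sqrt_eq_one.mp h
  have hmeas : Measurable fun x : Fin n → ℝ => Real.exp (t * ∑ j, x j * y j) := by
    apply Real.measurable_exp.comp
    exact measurable_const.mul (Finset.measurable_sum _ fun j _ =>
      (measurable_pi_apply j).mul measurable_const)
  have hmap : ∫ ω, Real.exp (t * ∑ j, a ω j * y j) ∂P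
      = ∫ x, Real.exp (t * ∑ j, x j * y j) ∂(P.map a) := by
    rw [integral_map ha.aemeasurable hmeas.aestronglyMeasurable]
  rw [hmap, hlaw]
  have hprod : ∀ x : Fin n → ℝ,
      Real.exp (t * ∑ j, x j * y j) = ∏ j, Real.exp ((t * y j) * x j) := by
    intro x
    rw [← Real.exp_sum]
    congr 1
    rw [Finset.mul_sum]
    exact Finset.sum_congr rfl fun j _ => by ring
  simp_rw [hprod]
  rw [integral_pi_prod (sparseGaussianLaw s) (fun j x => Real.exp ((t * y j) * x))]
  rw [Finset.prod_congr rfl fun j _ => sparse_mgf s hs0 hs1 (t * y j)]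
  -- pointwise bounds
  have hyj : ∀ j, y j ^ 2 ≤ lam₀ ^ 2 := by
    intro j
    have h1 : |y j| ≤ lInfNorm y := by
      unfold lInfNorm
      exact le_ciSup (Set.Finite.bddAbove (Set.finite_range fun i => |y i|)) j
    nlinarith [sq_abs (y j), abs_nonneg (y j)]
  have ht2 : t ^ 2 * lam₀ ^ 2 ≤ 2 * s := by
    have h1 : t ≤ Real.sqrt (2 * s) / lam₀ := htle
    have h2 : t * lam₀ ≤ Real.sqrt (2 * s) := by
      rw [← le_div_iff₀ hlam₀]; exact h1
    have h3 : (t * lam₀) ^ 2 ≤ Real.sqrt (2 * s) ^ 2 :=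
      pow_le_pow_left₀ (by positivity) h2 2
    rw [Real.sq_sqrt (by positivity)] at h3
    nlinarith
  have key : ∀ j, (1 - s) + s * Real.exp ((t * y j) ^ 2 / (2 * s))
      ≤ Real.exp (t ^ 2 * y j ^ 2) := by
    intro j
    set x := (t * y j) ^ 2 / (2 * s) with hx
    have hx0 : 0 ≤ x := by positivity
    have hx1 : x ≤ 1 := by
      rw [hx, div_le_one (by positivity)]
      nlinarith [hyj j, sq_nonneg t, sq_nonneg (y j)]
    have h2sx : 2 * s * x = t ^ 2 * y j ^ 2 := by
      rw [hx]
      field_simp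
    have hexp : Real.exp x ≤ 1 + 2 * x := exp_le_one_add_two_mul hx0 hx1
    have hstep : (1 - s) + s * Real.exp x ≤ 1 + 2 * s * x := by nlinarith
    calc (1 - s) + s * Real.exp x ≤ 1 + 2 * s * x := hstep
      _ ≤ Real.exp (2 * s * x) := by
          have := Real.add_one_le_exp (2 * s * x)
          linarith
      _ = Real.exp (t ^ 2 * y j ^ 2) := by rw [h2sx]
  calc ∏ j, ((1 - s) + s * Real.exp ((t * y j) ^ 2 / (2 * s)))
      ≤ ∏ j, Real.exp (t ^ 2 * y j ^ 2) := by
        apply Finset.prod_le_prod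
        · intro j _
          have : (0:ℝ) < Real.exp ((t * y j) ^ 2 / (2 * s)) := Real.exp_pos _
          nlinarith
        · exact fun j _ => key j
    _ = Real.exp (∑ j, t ^ 2 * y j ^ 2) := (Real.exp_sum _ _).symm
    _ = Real.exp (t ^ 2) := by rw [← Finset.mul_sum, hsum, mul_one]
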